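/- Let H be a complex Hilbert space, B ∈ B(H) self-adjoint, T₀ ∈ B(H) a contraction (‖T₀‖ ≤ 1), and T_t := e^{itB} T₀ for t ∈ ℝ. Then for every l ≥ 1 there exists a constant c_l > 0 depending only on l such that for all k ≥ 1 and all s, s₁, s₂ ∈ ℝ: ‖(d^l/dt^l)|_{t=s} T_t^k‖ ≤ c_l k^l ‖B‖^l, and ‖(d^l/dt^l)|_{t=s₂} T_t^k − (d^l/dt^l)|_{t=s₁} T_t^k‖ ≤ |s₂ − s₁| c_{l+1} k^{l+1} ‖B‖^{l+1}, where the derivatives are taken in the operator norm. -/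

import Mathlib

universe u
open NormedSpace

section aux
variable {A : Type*} [NormedRing A] [NormedAlgebra ℝ A] [CompleteSpace A]

lemma aux_hasDerivAt (C T₀ : A) (t : ℝ) :
    HasDerivAt (fun u : ℝ => exp (u • C) * T₀) (C * (exp (t • C) * T₀)) t := by
  simpa [mul_assoc] using (hasDerivAt_exp_smul_const' C t).mul_const T₀

lemma aux_iteratedDeriv (C T₀ : A) (n : ℕ) :
    iteratedDeriv n (fun u : ℝ => exp (u • C) * T₀)
      = fun t => C ^ n * (exp (t • C) * T₀) := by
  induction n with
  | zero => simp [iteratedDeriv_zero]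
  | succ n ih =>
    rw [iteratedDeriv_succ, ih]
    funext t
    have : HasDerivAt (fun t : ℝ => C ^ n * (exp (t • C) * T₀))
        (C ^ n * (C * (exp (t • C) * T₀))) t := (aux_hasDerivAt C T₀ t).const_mul _
    rw [this.deriv, ← mul_assoc, ← pow_succ]

lemma aux_contDiff (C T₀ : A) (n : ℕ) :
    ContDiff ℝ n (fun u : ℝ => exp (u • C) * T₀) := by
  induction n with
  | zero =>
    exact contDiff_zero.mpr (continuous_iff_continuousAt.mpr
      fun t => (aux_hasDerivAt C T₀ t).continuousAt)
  | succ n ih =>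
    rw [show ((n + 1 : ℕ) : WithTop ℕ∞) = (n : WithTop ℕ∞) + 1 by norm_cast,
      contDiff_succ_iff_deriv]
    refine ⟨fun t => (aux_hasDerivAt C T₀ t).differentiableAt, by simp, ?_⟩
    have hd : deriv (fun u : ℝ => exp (u • C) * T₀)
        = fun t => C * (exp (t • C) * T₀) := funext fun t => (aux_hasDerivAt C T₀ t).deriv
    rw [hd]
    exact contDiff_const.mul ih

/-- Key combinatorial bound. -/
lemma aux_pow_bound {g : ℝ → A} {M : ℝ} (hM : 0 ≤ M)
    (hg : ∀ n : ℕ, ContDiff ℝ n g)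
    (hbound : ∀ (n : ℕ) (t : ℝ), ‖iteratedDeriv n g t‖ ≤ M ^ n) :
    ∀ (k : ℕ), 1 ≤ k → ∀ (l : ℕ) (t : ℝ),
      ‖iteratedDeriv l (fun t => g t ^ k) t‖ ≤ ((k : ℝ) * M) ^ l := by
  intro k hk
  induction k with
  | zero => omega
  | succ k ih =>
    rcases Nat.eq_or_lt_of_le hk with h1 | h1
    · intro l t
      simpa [← h1] using hbound l t
    have hk' : 1 ≤ k := by omega
    intro l t
    have hmul : ‖iteratedFDeriv ℝ l (fun t => g t * g t ^ k) t‖ ≤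
        ∑ i ∈ Finset.range (l + 1), (l.choose i : ℝ) * ‖iteratedFDeriv ℝ i g t‖ *
          ‖iteratedFDeriv ℝ (l - i) (fun t => g t ^ k) t‖ :=
      norm_iteratedFDeriv_mul_le (hg l) ((hg l).pow k) t le_rfl
    have hfun : (fun t => g t ^ (k + 1)) = fun t => g t * g t ^ k := by
      funext t; rw [pow_succ']
    rw [hfun, ← norm_iteratedFDeriv_eq_norm_iteratedDeriv]
    refine hmul.trans ?_
    have hstep : ∀ i ∈ Finset.range (l + 1),
        (l.choose i : ℝ) * ‖iteratedFDeriv ℝ i g t‖ *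
          ‖iteratedFDeriv ℝ (l - i) (fun t => g t ^ k) t‖ ≤
        M ^ i * ((k : ℝ) * M) ^ (l - i) * (l.choose i : ℝ) := by
      intro i hi
      have h1 : ‖iteratedFDeriv ℝ i g t‖ ≤ M ^ i := by
        rw [norm_iteratedFDeriv_eq_norm_iteratedDeriv]; exact hbound i t
      have h2 : ‖iteratedFDeriv ℝ (l - i) (fun t => g t ^ k) t‖ ≤ ((k : ℝ) * M) ^ (l - i) := by
        rw [norm_iteratedFDeriv_eq_norm_iteratedDeriv]; exact ih hk' (l - i) t
      calc (l.choose i : ℝ) * ‖iteratedFDeriv ℝ i g t‖ *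
            ‖iteratedFDeriv ℝ (l - i) (fun t => g t ^ k) t‖
          ≤ (l.choose i : ℝ) * M ^ i * (((k : ℝ) * M) ^ (l - i)) :=
            mul_le_mul (mul_le_mul_of_nonneg_left h1 (by positivity)) h2 (norm_nonneg _)
              (by positivity)
        _ = M ^ i * ((k : ℝ) * M) ^ (l - i) * (l.choose i : ℝ) := by ring
    refine (Finset.sum_le_sum hstep).trans ?_
    rw [← add_pow]
    have : M + (k : ℝ) * M = ((k + 1 : ℕ) : ℝ) * M := by push_cast; ring
    rw [this]
end aux

set_option synthInstance.maxHeartbeats 1000000 in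
theorem stmt_13' {H : Type*} [NormedAddCommGroup H] [InnerProductSpace ℂ H] [CompleteSpace H]
    (B T₀ : H →L[ℂ] H) (hB : IsSelfAdjoint B) (hT : ‖T₀‖ ≤ 1)
    (l : ℕ) (hl : 1 ≤ l) (k : ℕ) (hk : 1 ≤ k) (s s₁ s₂ : ℝ) :
    ‖iteratedDeriv l
        (fun t : ℝ => (NormedSpace.exp (((t : ℂ) * Complex.I) • B) * T₀) ^ k) s‖ ≤
      1 * (k : ℝ) ^ l * ‖B‖ ^ l ∧
    ‖iteratedDeriv l
        (fun t : ℝ => (NormedSpace.exp (((t : ℂ) * Complex.I) • B) * T₀) ^ k) s₂ -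
      iteratedDeriv l
        (fun t : ℝ => (NormedSpace.exp (((t : ℂ) * Complex.I) • B) * T₀) ^ k) s₁‖ ≤
      |s₂ - s₁| * 1 * (k : ℝ) ^ (l + 1) * ‖B‖ ^ (l + 1) := by
  set C : H →L[ℂ] H := Complex.I • B with hC
  have hfun : (fun t : ℝ => (NormedSpace.exp (((t : ℂ) * Complex.I) • B) * T₀) ^ k)
      = fun t : ℝ => (exp (t • C) * T₀) ^ k := by
    funext t
    rw [mul_smul, Complex.coe_smul]
  have hnorm_exp : ∀ t : ℝ, ‖exp (t • C)‖ ≤ 1 := by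
    intro t
    have hstarC : star C = -C := by
      rw [hC, star_smul, Complex.star_def, Complex.conj_I, hB.star_eq, neg_smul]
    have hskew : (t • C) ∈ skewAdjoint (H →L[ℂ] H) := by
      rw [skewAdjoint.mem_iff, star_smul, hstarC, smul_neg, star_trivial]
    have hu : exp (t • C) ∈ unitary (H →L[ℂ] H) := by
      let +nondep : NormedAlgebra ℚ (H →L[ℂ] H) := .restrictScalars ℚ ℂ (H →L[ℂ] H)
      exact exp_mem_unitary_of_mem_skewAdjoint hskew
    have h1 : star (exp (t • C)) * exp (t • C) = 1 := (Unitary.mem_iff.mp hu).1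
    have h2 : ‖star (exp (t • C)) * exp (t • C)‖ = ‖exp (t • C)‖ * ‖exp (t • C)‖ :=
      CStarRing.norm_star_mul_self
    have hone : ‖(1 : H →L[ℂ] H)‖ ≤ 1 := ContinuousLinearMap.norm_id_le
    rw [h1] at h2
    nlinarith [norm_nonneg (exp (t • C))]
  have hg1 : ∀ t : ℝ, ‖exp (t • C) * T₀‖ ≤ 1 := by
    intro t
    refine (norm_mul_le _ _).trans ?_
    nlinarith [norm_nonneg (exp (t • C)), norm_nonneg T₀, hnorm_exp t]
  have hCnorm : ‖C‖ = ‖B‖ := by rw [hC, norm_smul, Complex.norm_I, one_mul]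
  have hbound : ∀ (n : ℕ) (t : ℝ),
      ‖iteratedDeriv n (fun u : ℝ => exp (u • C) * T₀) t‖ ≤ ‖B‖ ^ n := by
    intro n t
    rw [aux_iteratedDeriv]
    rcases Nat.eq_zero_or_pos n with rfl | hn
    · simpa using hg1 t
    calc ‖C ^ n * (exp (t • C) * T₀)‖ ≤ ‖C ^ n‖ * ‖exp (t • C) * T₀‖ := norm_mul_le _ _
      _ ≤ ‖C‖ ^ n * 1 :=
          mul_le_mul (norm_pow_le' _ hn) (hg1 t) (norm_nonneg _) (by positivity)
      _ = ‖B‖ ^ n := by rw [mul_one, hCnorm]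
  have key : ∀ (m : ℕ) (t : ℝ),
      ‖iteratedDeriv m (fun t : ℝ => (exp (t • C) * T₀) ^ k) t‖ ≤ ((k : ℝ) * ‖B‖) ^ m :=
    fun m t => aux_pow_bound (norm_nonneg B) (aux_contDiff C T₀) hbound k hk m t
  rw [hfun]
  constructor
  · calc ‖iteratedDeriv l (fun t : ℝ => (exp (t • C) * T₀) ^ k) s‖
        ≤ ((k : ℝ) * ‖B‖) ^ l := key l s
      _ = 1 * (k : ℝ) ^ l * ‖B‖ ^ l := by rw [mul_pow]; ring
  · set F := fun t : ℝ => (exp (t • C) * T₀) ^ k with hF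
    have hdiff : ∀ x ∈ Set.univ, DifferentiableAt ℝ (iteratedDeriv l F) x := by
      intro x _
      exact (((aux_contDiff C T₀ (l + 1)).pow k).differentiable_iteratedDeriv l
        (by exact_mod_cast l.lt_succ_self)).differentiableAt
    have hbd : ∀ x ∈ Set.univ, ‖deriv (iteratedDeriv l F) x‖ ≤ ((k : ℝ) * ‖B‖) ^ (l + 1) := by
      intro x _
      rw [← iteratedDeriv_succ]
      exact key (l + 1) x
    have := Convex.norm_image_sub_le_of_norm_deriv_le hdiff hbd convex_univ
      (Set.mem_univ s₁) (Set.mem_univ s₂)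
    rw [Real.norm_eq_abs] at this
    calc ‖iteratedDeriv l F s₂ - iteratedDeriv l F s₁‖
        ≤ ((k : ℝ) * ‖B‖) ^ (l + 1) * |s₂ - s₁| := this
      _ = |s₂ - s₁| * 1 * (k : ℝ) ^ (l + 1) * ‖B‖ ^ (l + 1) := by rw [mul_pow]; ring


/-- For each `l ≥ 1` there is a constant `c l > 0` depending only on `l` such that for any
self-adjoint `B`, contraction `T₀`, and `T_t = e^{itB} T₀`:
`‖(d^l/dt^l)|_{t=s} T_t^k‖ ≤ c_l k^l ‖B‖^l` and
`‖(d^l/dt^l)|_{t=s₂} T_t^k − (d^l/dt^l)|_{t=s₁} T_t^k‖ ≤ |s₂−s₁| c_{l+1} k^{l+1} ‖B‖^{l+1}`. -/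
theorem stmt_13 :
    ∃ c : ℕ → ℝ, (∀ l : ℕ, 1 ≤ l → 0 < c l) ∧
      ∀ (H : Type u) [NormedAddCommGroup H] [InnerProductSpace ℂ H] [CompleteSpace H],
        ∀ B T₀ : H →L[ℂ] H, IsSelfAdjoint B → ‖T₀‖ ≤ 1 →
          ∀ l : ℕ, 1 ≤ l → ∀ k : ℕ, 1 ≤ k → ∀ s s₁ s₂ : ℝ,
            ‖iteratedDeriv l
                (fun t : ℝ => (NormedSpace.exp (((t : ℂ) * Complex.I) • B) * T₀) ^ k) s‖ ≤
              c l * (k : ℝ) ^ l * ‖B‖ ^ l ∧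
            ‖iteratedDeriv l
                (fun t : ℝ => (NormedSpace.exp (((t : ℂ) * Complex.I) • B) * T₀) ^ k) s₂ -
              iteratedDeriv l
                (fun t : ℝ => (NormedSpace.exp (((t : ℂ) * Complex.I) • B) * T₀) ^ k) s₁‖ ≤
              |s₂ - s₁| * c (l + 1) * (k : ℝ) ^ (l + 1) * ‖B‖ ^ (l + 1) := by
  exact ⟨fun _ => 1, fun l _ => one_pos,
    fun H _ _ _ B T₀ hB hT l hl k hk s s₁ s₂ => stmt_13' B T₀ hB hT l hl k hk s s₁ s₂⟩
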